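/- Let G = (V,E) be a finite bi-directed graph, let n : {0,1}^V → ℕ be counts indexed by cells, written n_A = n((0_A, 1_{V∖A})) for A ⊆ V, and consider the log-likelihood ℓ(q) = Σ_{A ⊆ V} n_A · log p_A^V(q) as a function of the variables (q_C : ∅ ≠ C ⊆ V connected in G), defined on the open set where p_A^V(q) > 0 for all A ⊆ V. Then for every nonempty connected set C, the partial derivative of ℓ with respect to q_C equals ∂ℓ/∂q_C = Σ_{A : spo(C) ∩ (A∖C) = ∅} (−1)^{|C∖A|} · (n_A / p_A^V(q)) · p_{A∖C}^{V∖spo(C)}(q), the sum being over all A ⊆ V with spo(C) ∩ (A∖C) = ∅. -/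

import Mathlib

open Finset SimpleGraph

namespace BMMI

variable {V : Type*} [Fintype V] [DecidableEq V]

/-- `Pr p A a` is the probability of the event `X_A = a|_A` under `p`. -/
def Pr (p : (V → Bool) → ℝ) (A : Finset V) (a : V → Bool) : ℝ :=
  ∑ i ∈ Finset.univ.filter (fun i : V → Bool => ∀ v ∈ A, i v = a v), p i

/-- `p` is a binary distribution on `V`. -/
def IsDist (p : (V → Bool) → ℝ) : Prop :=
  (∀ i, 0 ≤ p i) ∧ ∑ i : V → Bool, p i = 1

/-- `Pr2 p S T a b` is the probability of the joint event `X_S = a|_S, X_T = b|_T`. -/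
def Pr2 (p : (V → Bool) → ℝ) (S T : Finset V) (a b : V → Bool) : ℝ :=
  ∑ i ∈ Finset.univ.filter
      (fun i : V → Bool => (∀ v ∈ S, i v = a v) ∧ (∀ v ∈ T, i v = b v)), p i

/-- `X_S` and `X_T` are independent under `p`. -/
def Indep (p : (V → Bool) → ℝ) (S T : Finset V) : Prop :=
  ∀ a b : V → Bool, Pr2 p S T a b = Pr p S a * Pr p T b

/-- `spo G A` consists of `A` together with all vertices adjacent to a vertex of `A`. -/
def spo (G : SimpleGraph V) [DecidableRel G.Adj] (A : Finset V) : Finset V :=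
  Finset.univ.filter (fun w => w ∈ A ∨ ∃ v ∈ A, G.Adj v w)

/-- `C` is connected in `G`: every pair of vertices of `C` is joined by a walk
all of whose vertices lie in `C`. -/
def Conn (G : SimpleGraph V) (C : Finset V) : Prop :=
  ∀ v ∈ C, ∀ w ∈ C, ∃ W : G.Walk v w, ∀ x ∈ W.support, x ∈ C

/-- The connected set Markov property for the bi-directed graph `G`. -/
def CSMP (G : SimpleGraph V) [DecidableRel G.Adj] (p : (V → Bool) → ℝ) : Prop :=
  ∀ C : Finset V, C.Nonempty → Conn G C → Indep p C (Finset.univ \ spo G C)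

/-- `C` is an inclusion-maximal connected subset of `D` (a connected component of the
induced subgraph on `D`). -/
def IsMaxConnComp (G : SimpleGraph V) (D C : Finset V) : Prop :=
  C ⊆ D ∧ C.Nonempty ∧ Conn G C ∧
    ∀ C' : Finset V, C ⊆ C' → C' ⊆ D → Conn G C' → C' = C

/-- The Möbius parameter `q_A(p) = P(X_A = 0)`. -/
def qM (p : (V → Bool) → ℝ) (A : Finset V) : ℝ := Pr p A (fun _ => false)

open Classical in
/-- `[B]_G`: the finset of inclusion-maximal connected subsets of `B`. -/
noncomputable def maxConnComps (G : SimpleGraph V) (B : Finset V) :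
    Finset (Finset V) :=
  B.powerset.filter (fun C => IsMaxConnComp G B C)

/-- The polynomial `p_A^W(q) = Σ_{A ⊆ B ⊆ W} (−1)^{|B∖A|} ∏_{C ∈ [B]_G} q_C`
in the variables `q`. -/
noncomputable def pPoly (G : SimpleGraph V) (A W : Finset V)
    (q : Finset V → ℝ) : ℝ :=
  ∑ B ∈ Finset.univ.filter (fun B : Finset V => A ⊆ B ∧ B ⊆ W),
    (-1 : ℝ) ^ (B \ A).card * ∏ C ∈ maxConnComps G B, q C

lemma mem_spo {G : SimpleGraph V} [DecidableRel G.Adj] {A : Finset V} {x : V} :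
    x ∈ spo G A ↔ x ∈ A ∨ ∃ v ∈ A, G.Adj v x := by
  simp [spo]

lemma mem_maxConnComps {G : SimpleGraph V} {B D : Finset V} :
    D ∈ maxConnComps G B ↔ IsMaxConnComp G B D := by
  classical
  simp only [maxConnComps, mem_filter, mem_powerset]
  exact ⟨fun h => h.2, fun h => ⟨h.1, h⟩⟩

lemma conn_insert {G : SimpleGraph V} {C : Finset V} (hconn : Conn G C) {v x : V}
    (hv : v ∈ C) (hadj : G.Adj v x) : Conn G (insert x C) := by
  have key : ∀ c ∈ C, ∃ W : G.Walk x c, ∀ y ∈ W.support, y ∈ insert x C := by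
    intro c hc
    obtain ⟨W, hW⟩ := hconn v hv c hc
    refine ⟨Walk.cons hadj.symm W, ?_⟩
    intro y hy
    rw [Walk.support_cons] at hy
    rcases List.mem_cons.mp hy with h | h
    · exact h ▸ mem_insert_self _ _
    · exact mem_insert_of_mem (hW y h)
  intro a ha b hb
  rcases mem_insert.mp ha with heqa | haC
  · subst heqa
    rcases mem_insert.mp hb with heqb | hbC
    · subst heqb
      exact ⟨Walk.nil, by simp⟩
    · exact key b hbC
  · rcases mem_insert.mp hb with heqb | hbC
    · subst heqb
      obtain ⟨W, hW⟩ := key a haC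
      refine ⟨W.reverse, ?_⟩
      intro y hy
      rw [Walk.support_reverse, List.mem_reverse] at hy
      exact hW y hy
    · obtain ⟨W, hW⟩ := hconn a haC b hbC
      exact ⟨W, fun y hy => mem_insert_of_mem (hW y hy)⟩

lemma walk_end_mem {G : SimpleGraph V} [DecidableRel G.Adj] {B C : Finset V}
    (hspo : B ∩ spo G C ⊆ C) :
    ∀ {v w : V} (W : G.Walk v w), (∀ x ∈ W.support, x ∈ B) → v ∈ C → w ∈ C := by
  intro v w W
  induction W with
  | nil => exact fun _ h => h
  | @cons a b c h W ih =>
    intro hsup ha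
    refine ih (fun x hx => hsup x ?_) (hspo ?_)
    · rw [Walk.support_cons]; exact List.mem_cons_of_mem _ hx
    · rw [mem_inter]
      refine ⟨hsup b ?_, mem_spo.mpr (Or.inr ⟨a, ha, h⟩)⟩
      rw [Walk.support_cons]; exact List.mem_cons_of_mem _ W.start_mem_support

lemma isMaxConnComp_iff {G : SimpleGraph V} [DecidableRel G.Adj] {C B : Finset V}
    (hC : C.Nonempty) (hconn : Conn G C) :
    IsMaxConnComp G B C ↔ C ⊆ B ∧ B ∩ spo G C ⊆ C := by
  constructor
  · rintro ⟨hsub, -, -, hmax⟩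
    refine ⟨hsub, fun x hx => ?_⟩
    rw [mem_inter] at hx
    obtain ⟨hxB, hxspo⟩ := hx
    rcases mem_spo.mp hxspo with h | ⟨v, hv, hadj⟩
    · exact h
    · by_contra hxC
      have h1 : insert x C = C :=
        hmax (insert x C) (subset_insert _ _) (insert_subset hxB hsub)
          (conn_insert hconn hv hadj)
      exact hxC (h1 ▸ mem_insert_self x C)
  · rintro ⟨hsub, hspo⟩
    refine ⟨hsub, hC, hconn, fun C' hCC' hC'B hconn' => ?_⟩
    refine Finset.Subset.antisymm (fun y hy => ?_) hCC'
    obtain ⟨v, hv⟩ := hC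
    obtain ⟨W, hW⟩ := hconn' v (hCC' hv) y hy
    exact walk_end_mem hspo W (fun x hx => hC'B (hW x hx)) hv

lemma maxConnComps_sdiff {G : SimpleGraph V} [DecidableRel G.Adj] {C B : Finset V}
    (hC : C.Nonempty) (hconn : Conn G C) (hsub : C ⊆ B) (hspo : B ∩ spo G C ⊆ C) :
    maxConnComps G B = insert C (maxConnComps G (B \ C)) := by
  ext D
  rw [mem_insert, mem_maxConnComps, mem_maxConnComps]
  constructor
  · intro hc
    by_cases hDC : D = C
    · exact Or.inl hDC
    right
    have hdisj : ∀ x ∈ D, x ∉ C := by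
      intro x hxD hxC
      have hDsubC : D ⊆ C := by
        intro y hyD
        obtain ⟨W, hW⟩ := hc.2.2.1 x hxD y hyD
        exact walk_end_mem hspo W (fun z hz => hc.1 (hW z hz)) hxC
      exact hDC (hc.2.2.2 C hDsubC hsub hconn).symm
    refine ⟨fun x hx => mem_sdiff.mpr ⟨hc.1 hx, hdisj x hx⟩, hc.2.1, hc.2.2.1, ?_⟩
    exact fun D' h1 h2 h3 => hc.2.2.2 D' h1 (h2.trans (sdiff_subset)) h3
  · rintro (rfl | hd)
    · exact (isMaxConnComp_iff hC hconn).mpr ⟨hsub, hspo⟩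
    refine ⟨hd.1.trans sdiff_subset, hd.2.1, hd.2.2.1, fun D' h1 h2 h3 => ?_⟩
    refine hd.2.2.2 D' h1 (fun x hx => mem_sdiff.mpr ⟨h2 hx, fun hxC => ?_⟩) h3
    obtain ⟨y, hy⟩ := hd.2.1
    have : y ∈ C := by
      obtain ⟨W, hW⟩ := h3 x hx y (h1 hy)
      exact walk_end_mem hspo W (fun z hz => h2 (hW z hz)) hxC
    exact (mem_sdiff.mp (hd.1 hy)).2 this

lemma C_not_mem_sdiff {G : SimpleGraph V} {C B : Finset V} (hC : C.Nonempty) :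
    C ∉ maxConnComps G (B \ C) := by
  rw [mem_maxConnComps]
  rintro ⟨hsub, -, -, -⟩
  obtain ⟨v, hv⟩ := hC
  exact (mem_sdiff.mp (hsub hv)).2 hv

/-- coefficient of `q C` in `pPoly G A univ`. -/
noncomputable def dcoef (G : SimpleGraph V) (C A : Finset V) (q : Finset V → ℝ) : ℝ :=
  ∑ B ∈ Finset.univ.filter (fun B : Finset V => A ⊆ B ∧ C ∈ maxConnComps G B),
    (-1 : ℝ) ^ (B \ A).card * ∏ C' ∈ (maxConnComps G B).erase C, q C'

lemma hasDerivAt_pPoly (G : SimpleGraph V) (A C : Finset V) (q : Finset V → ℝ)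
    (s : ℝ) :
    HasDerivAt (fun s => pPoly G A Finset.univ (Function.update q C s))
      (dcoef G C A q) s := by
  have hrw : dcoef G C A q
      = ∑ B ∈ Finset.univ.filter (fun B : Finset V => A ⊆ B ∧ B ⊆ Finset.univ),
          (if C ∈ maxConnComps G B then
            (-1 : ℝ) ^ (B \ A).card * ∏ C' ∈ (maxConnComps G B).erase C, q C'
          else 0) := by
    rw [dcoef, Finset.sum_filter, Finset.sum_filter]
    refine Finset.sum_congr rfl (fun B _ => ?_)
    by_cases h1 : A ⊆ B <;> by_cases h2 : C ∈ maxConnComps G B <;>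
      simp [h1, h2, Finset.subset_univ]
  rw [hrw]
  unfold pPoly
  refine HasDerivAt.fun_sum (fun B _ => ?_)
  by_cases hB : C ∈ maxConnComps G B
  · have hfun : ∀ t : ℝ, (∏ C' ∈ maxConnComps G B, Function.update q C t C')
        = t * ∏ C' ∈ (maxConnComps G B).erase C, q C' := by
      intro t
      rw [← Finset.mul_prod_erase _ _ hB, Function.update_self]
      congr 1
      exact Finset.prod_congr rfl (fun x hx =>
        Function.update_of_ne (Finset.ne_of_mem_erase hx) _ _)
    simp only [hfun, hB, if_pos]
    have := ((hasDerivAt_id s).mul_const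
      (∏ C' ∈ (maxConnComps G B).erase C, q C')).const_mul
      ((-1 : ℝ) ^ (B \ A).card)
    simpa [mul_assoc] using this
  · have hfun : ∀ t : ℝ, (∏ C' ∈ maxConnComps G B, Function.update q C t C')
        = ∏ C' ∈ maxConnComps G B, q C' := by
      intro t
      exact Finset.prod_congr rfl (fun x hx =>
        Function.update_of_ne (fun h => hB (by rwa [h] at hx)) _ _)
    simp only [hfun, hB, if_neg, not_false_iff]
    exact hasDerivAt_const _ _

lemma dcoef_eq (G : SimpleGraph V) [DecidableRel G.Adj] (C : Finset V)
    (hC : C.Nonempty) (hconn : Conn G C) (A : Finset V) (q : Finset V → ℝ) :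
    dcoef G C A q
      = (-1 : ℝ) ^ (C \ A).card * pPoly G (A \ C) (Finset.univ \ spo G C) q := by
  rw [dcoef, pPoly, Finset.mul_sum]
  refine Finset.sum_bij' (fun B _ => B \ C) (fun B' _ => B' ∪ C) ?_ ?_ ?_ ?_ ?_
  · -- maps into target
    intro B hB
    rw [Finset.mem_filter] at hB ⊢
    obtain ⟨-, hAB, hCB⟩ := hB
    obtain ⟨hsub, hspo⟩ := (isMaxConnComp_iff hC hconn).mp (mem_maxConnComps.mp hCB)
    refine ⟨Finset.mem_univ _, fun x hx => ?_, fun x hx => ?_⟩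
    · rw [Finset.mem_sdiff] at hx ⊢
      exact ⟨hAB hx.1, hx.2⟩
    · rw [Finset.mem_sdiff] at hx ⊢
      exact ⟨Finset.mem_univ _, fun hxspo => hx.2 (hspo (Finset.mem_inter.mpr ⟨hx.1, hxspo⟩))⟩
  · -- inverse maps into source
    intro B' hB'
    rw [Finset.mem_filter] at hB' ⊢
    obtain ⟨-, hAB', hB'sub⟩ := hB'
    have hdisj : ∀ x ∈ B', x ∉ spo G C := fun x hx =>
      (Finset.mem_sdiff.mp (hB'sub hx)).2
    refine ⟨Finset.mem_univ _, fun x hx => ?_, ?_⟩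
    · by_cases hxC : x ∈ C
      · exact Finset.mem_union_right _ hxC
      · exact Finset.mem_union_left _ (hAB' (Finset.mem_sdiff.mpr ⟨hx, hxC⟩))
    · rw [mem_maxConnComps, isMaxConnComp_iff hC hconn]
      refine ⟨Finset.subset_union_right, fun x hx => ?_⟩
      rw [Finset.mem_inter, Finset.mem_union] at hx
      rcases hx.1 with h | h
      · exact absurd hx.2 (hdisj x h)
      · exact h
  · -- left inverse
    intro B hB
    rw [Finset.mem_filter] at hB
    obtain ⟨hsub, -⟩ := (isMaxConnComp_iff hC hconn).mp (mem_maxConnComps.mp hB.2.2)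
    exact Finset.sdiff_union_of_subset hsub
  · -- right inverse
    intro B' hB'
    rw [Finset.mem_filter] at hB'
    have hdisj : ∀ x ∈ B', x ∉ C := fun x hx hxC =>
      (Finset.mem_sdiff.mp (hB'.2.2 hx)).2 (mem_spo.mpr (Or.inl hxC))
    show (B' ∪ C) \ C = B'
    rw [Finset.union_sdiff_distrib, Finset.sdiff_self, Finset.union_empty]
    exact Finset.sdiff_eq_self_of_disjoint (Finset.disjoint_left.mpr hdisj)
  · -- terms agree
    intro B hB
    rw [Finset.mem_filter] at hB
    obtain ⟨-, hAB, hCB⟩ := hB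
    obtain ⟨hsub, hspo⟩ := (isMaxConnComp_iff hC hconn).mp (mem_maxConnComps.mp hCB)
    have hcomps : maxConnComps G B = insert C (maxConnComps G (B \ C)) :=
      maxConnComps_sdiff hC hconn hsub hspo
    have hprod : (maxConnComps G B).erase C = maxConnComps G (B \ C) := by
      rw [hcomps, Finset.erase_insert (C_not_mem_sdiff hC)]
    have hcard : (B \ A).card = (C \ A).card + ((B \ C) \ (A \ C)).card := by
      have hsets : B \ A = (C \ A) ∪ ((B \ C) \ (A \ C)) := by
        ext x
        simp only [Finset.mem_sdiff, Finset.mem_union]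
        constructor
        · rintro ⟨hxB, hxA⟩
          by_cases hx : x ∈ C
          · exact Or.inl ⟨hx, hxA⟩
          · exact Or.inr ⟨⟨hxB, hx⟩, fun h => hxA h.1⟩
        · rintro (⟨h1, h2⟩ | ⟨⟨h1, h2⟩, h3⟩)
          · exact ⟨hsub h1, h2⟩
          · exact ⟨h1, fun hA => h3 ⟨hA, h2⟩⟩
      rw [hsets, Finset.card_union_of_disjoint]
      rw [Finset.disjoint_left]
      intro x hx hx'
      exact (Finset.mem_sdiff.mp (Finset.mem_sdiff.mp hx').1).2 (Finset.mem_sdiff.mp hx).1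
    rw [hprod, hcard, pow_add]
    ring

/-- The likelihood equations: the partial derivative of the log-likelihood
`ℓ(q) = Σ_A n_A log p_A^V(q)` with respect to `q_C`, `C` a nonempty connected set,
is `Σ_{A : spo(C) ∩ (A∖C) = ∅} (−1)^{|C∖A|} (n_A / p_A^V) p_{A∖C}^{V∖spo(C)}`. -/
theorem stmt15 (G : SimpleGraph V) [DecidableRel G.Adj] (n : (V → Bool) → ℕ)
    (C : Finset V) (hC : C.Nonempty) (hconn : Conn G C)
    (q : Finset V → ℝ) (hq : ∀ A : Finset V, 0 < pPoly G A Finset.univ q) :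
    HasDerivAt
      (fun s : ℝ => ∑ A : Finset V,
        (n (fun v => if v ∈ A then false else true) : ℝ) *
          Real.log (pPoly G A Finset.univ (Function.update q C s)))
      (∑ A ∈ Finset.univ.filter (fun A : Finset V => spo G C ∩ (A \ C) = ∅),
        (-1 : ℝ) ^ (C \ A).card *
          ((n (fun v => if v ∈ A then false else true) : ℝ) /
            pPoly G A Finset.univ q) *
          pPoly G (A \ C) (Finset.univ \ spo G C) q)
      (q C) := by
  classical
  have key : ∀ A : Finset V, HasDerivAt
      (fun s : ℝ => (n (fun v => if v ∈ A then false else true) : ℝ) *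
        Real.log (pPoly G A Finset.univ (Function.update q C s)))
      ((n (fun v => if v ∈ A then false else true) : ℝ) *
        (dcoef G C A q / pPoly G A Finset.univ q)) (q C) := by
    intro A
    have h1 := hasDerivAt_pPoly G A C q (q C)
    have h2 : pPoly G A Finset.univ (Function.update q C (q C))
        = pPoly G A Finset.univ q := by rw [Function.update_eq_self]
    have h3 := h1.log (by rw [h2]; exact (hq A).ne')
    rw [h2] at h3
    exact h3.const_mul _
  have hsum := HasDerivAt.fun_sum
    (fun A (_ : A ∈ (Finset.univ : Finset (Finset V))) => key A)
  have heq : (∑ A ∈ Finset.univ.filter (fun A : Finset V => spo G C ∩ (A \ C) = ∅),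
        (-1 : ℝ) ^ (C \ A).card *
          ((n (fun v => if v ∈ A then false else true) : ℝ) /
            pPoly G A Finset.univ q) *
          pPoly G (A \ C) (Finset.univ \ spo G C) q)
      = ∑ A : Finset V, (n (fun v => if v ∈ A then false else true) : ℝ) *
          (dcoef G C A q / pPoly G A Finset.univ q) := by
    rw [Finset.sum_subset (Finset.filter_subset _ Finset.univ) ?_]
    · refine Finset.sum_congr rfl (fun A _ => ?_)
      rw [dcoef_eq G C hC hconn A q]
      ring
    · intro A _ hA
      rw [Finset.mem_filter, not_and] at hA
      have hne := hA (Finset.mem_univ A)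
      have hzero : pPoly G (A \ C) (Finset.univ \ spo G C) q = 0 := by
        rw [pPoly]
        convert Finset.sum_empty
        rw [Finset.filter_eq_empty_iff]
        intro B _
        rintro ⟨hsub, hB⟩
        obtain ⟨x, hx⟩ := Finset.nonempty_iff_ne_empty.mpr hne
        rw [Finset.mem_inter] at hx
        exact (Finset.mem_sdiff.mp (hB (hsub hx.2))).2 hx.1
      rw [hzero]
      ring
  rw [heq]
  exact hsum


end BMMI
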